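/- (Kaneko–Zagier; shuffle–reversal relation for 𝒜-finite multiple zeta values.) For all words w = z_{k_1}⋯z_{k_r} and w' = z_{k'_1}⋯z_{k'_s} in 𝔥¹, one has Z_𝒜(w ш w') = (−1)^{k_1+⋯+k_r} Z_𝒜(z_{k_r}⋯z_{k_1}z_{k'_1}⋯z_{k'_s}), where k_1+⋯+k_r is the total degree of w in x and y. -/

import Mathlib

noncomputable section

namespace FMZVNote

/-- The noncommutative polynomial ring `𝔥 = ℚ⟨x,y⟩` in two indeterminates `x`, `y`. -/
abbrev H : Type := FreeAlgebra ℚ (Fin 2)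

/-- The generator `x`. -/
def x : H := FreeAlgebra.ι ℚ 0

/-- The generator `y`. -/
def y : H := FreeAlgebra.ι ℚ 1

/-- `z = x + y`. -/
def z : H := x + y

/-- `z_k = x^{k-1} y`. -/
def zk (k : ℕ) : H := x ^ (k - 1) * y

/-- The word `z_{k_1} ⋯ z_{k_r}` associated to an index `(k_1, …, k_r)`. -/
def zword (ks : List ℕ) : H := (ks.map zk).prod

/-- The ideal `⊕_p ℤ/pℤ` of finitely supported elements of `∏_p ℤ/pℤ`. -/
def finSupportIdeal : Ideal (∀ p : Nat.Primes, ZMod p) where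
  carrier := {f | {p : Nat.Primes | f p ≠ 0}.Finite}
  zero_mem' := by simp
  add_mem' := by
    intro a b ha hb
    refine (ha.union hb).subset ?_
    intro p hp
    simp only [Set.mem_setOf_eq, Set.mem_union]
    by_contra h
    push_neg at h
    exact hp (by simp [h.1, h.2])
  smul_mem' := by
    intro c f hf
    refine hf.subset ?_
    intro p hp
    simp only [Set.mem_setOf_eq] at hp ⊢
    intro h
    exact hp (by simp [h])

/-- The ring `𝒜 = (∏_p ℤ/pℤ)/(⊕_p ℤ/pℤ)`, where `p` runs over all primes. -/
abbrev Acal : Type := (∀ p : Nat.Primes, ZMod p) ⧸ finSupportIdeal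

theorem Acal.isUnit_intCast (n : ℤ) (hn : n ≠ 0) : IsUnit ((n : ℤ) : Acal) := by
  refine IsUnit.of_mul_eq_one
    (Ideal.Quotient.mk finSupportIdeal fun p => ((n : ZMod p))⁻¹) ?_
  have h1 : ((n : ℤ) : Acal)
      = Ideal.Quotient.mk finSupportIdeal (fun p => ((n : ZMod p))) := by
    rw [← map_intCast (Ideal.Quotient.mk finSupportIdeal) n]
    rfl
  rw [h1, ← map_mul, ← map_one (Ideal.Quotient.mk finSupportIdeal), Ideal.Quotient.eq]
  have hfin : {p : Nat.Primes | ((n : ZMod (p : ℕ))) = 0}.Finite := by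
    have hsub : {p : Nat.Primes | ((n : ZMod (p : ℕ))) = 0} ⊆
        (fun p : Nat.Primes => (p : ℕ)) ⁻¹' (Set.Iic n.natAbs) := by
      intro p hp
      simp only [Set.mem_setOf_eq] at hp
      haveI : NeZero (p : ℕ) := ⟨p.2.ne_zero⟩
      rw [ZMod.intCast_zmod_eq_zero_iff_dvd] at hp
      have hd : (p : ℕ) ∣ n.natAbs := by
        have := Int.natAbs_dvd_natAbs.mpr hp
        simpa using this
      exact Nat.le_of_dvd (Int.natAbs_pos.mpr hn) hd
    exact ((Set.finite_Iic _).preimage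
      (fun a _ b _ h => Subtype.ext h)).subset hsub
  refine hfin.subset ?_
  intro p hp
  simp only [Set.mem_setOf_eq] at hp ⊢
  by_contra h
  apply hp
  haveI : Fact (p : ℕ).Prime := ⟨p.2⟩
  simp [mul_inv_cancel₀ h]

/-- Every nonzero integer is invertible in `𝒜`, so `𝒜` is a `ℚ`-algebra. -/
instance : Algebra ℚ Acal :=
  (IsLocalization.lift (M := nonZeroDivisors ℤ) (S := ℚ)
    (g := Int.castRingHom Acal)
    (fun v => Acal.isUnit_intCast v.1 (nonZeroDivisors.ne_zero v.2))).toAlgebra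

instance : Module ℚ Acal := Algebra.toModule

/-- The finite multiple zeta value `ζ_𝒜(k_1,…,k_r)`, the class in `𝒜` of the tuple
`(Σ_{p>n_1>⋯>n_r≥1} 1/(n_1^{k_1}⋯n_r^{k_r}) mod p)_p`. -/
def zetaA (k : List ℕ) : Acal :=
  Ideal.Quotient.mk finSupportIdeal fun p =>
    ∑ n : Fin k.length → Fin p,
      if (∀ i, 0 < (n i : ℕ)) ∧
          (∀ i j : Fin k.length, i < j → (n j : ℕ) < (n i : ℕ)) then
        ∏ i, ((((n i : ℕ) : ZMod p)) ^ k.get i)⁻¹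
      else 0

/-- A word in the letters `x` (= `0`) and `y` (= `1`), as an element of `𝔥`. -/
def lword (w : List (Fin 2)) : H := (w.map (FreeAlgebra.ι ℚ)).prod

/-- The shuffle product of two words in the letters `x`, `y`, determined by
`1 ш w = w ш 1 = w` and `au ш bv = a(u ш bv) + b(au ш v)`. -/
def shprod : List (Fin 2) → List (Fin 2) → H
  | [], w => lword w
  | a :: u, [] => lword (a :: u)
  | a :: u, b :: v =>
      FreeAlgebra.ι ℚ a * shprod u (b :: v) + FreeAlgebra.ι ℚ b * shprod (a :: u) v
  termination_by u v => u.length + v.length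

/-- The list of letters (`0 = x`, `1 = y`) of the word `z_{k_1}⋯z_{k_r}`. -/
def zletters (ks : List ℕ) : List (Fin 2) :=
  (ks.map fun k => List.replicate (k - 1) 0 ++ [1]).flatten

open Finset in
private lemma triangleStep {M : Type*} [AddCommMonoid M] (F : ℕ → ℕ → M) (N : ℕ) :
    ∑ i ∈ range (N+1), ∑ j ∈ range (N + 1 - i), F i j
      = (∑ i ∈ range N, ∑ j ∈ range (N - i), F i j) + ∑ i ∈ range (N+1), F i (N - i) := by
  have h1 : ∀ i ∈ range (N+1), ∑ j ∈ range (N + 1 - i), F i j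
      = (∑ j ∈ range (N - i), F i j) + F i (N - i) := by
    intro i hi
    have : N + 1 - i = (N - i) + 1 := by
      have := Finset.mem_range.mp hi; omega
    rw [this, Finset.sum_range_succ]
  rw [Finset.sum_congr rfl h1, Finset.sum_add_distrib,
    Finset.sum_range_succ (fun i => ∑ j ∈ range (N - i), F i j)]
  simp

open Finset in
private lemma triangleT1 {M : Type*} [AddCommMonoid M] (F : ℕ → ℕ → M) (N : ℕ) :
    ∑ n ∈ range N, ∑ i ∈ range (n+1), F i (n - i)
      = ∑ i ∈ range N, ∑ j ∈ range (N - i), F i j := by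
  induction N with
  | zero => simp
  | succ N ih => rw [Finset.sum_range_succ, ih, triangleStep]

open Finset in
private lemma triangleRefl {M : Type*} [AddCommMonoid M] (F : ℕ → ℕ → M) (N : ℕ) :
    ∑ i ∈ range (N+1), F i (N - i) = ∑ i ∈ range (N+1), F (N - i) i := by
  rw [← Finset.sum_range_reflect (fun i => F i (N - i)) (N+1)]
  refine Finset.sum_congr rfl fun i hi => ?_
  have : i ≤ N := by have := Finset.mem_range.mp hi; omega
  congr 1 <;> omega

open Finset in
private lemma triangleT2 {M : Type*} [AddCommMonoid M] (F : ℕ → ℕ → M) (N : ℕ) :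
    ∑ i ∈ range N, ∑ j ∈ range (N - i), F i j
      = ∑ j ∈ range N, ∑ i ∈ range (N - j), F i j := by
  induction N with
  | zero => simp
  | succ N ih =>
    rw [triangleStep, triangleStep (fun j i => F i j), ih, triangleRefl]

/-- All interleavings (with multiplicity) of two words. -/
def shuffles : List (Fin 2) → List (Fin 2) → List (List (Fin 2))
  | [], w => [w]
  | a :: u, [] => [a :: u]
  | a :: u, b :: v =>
      ((shuffles u (b :: v)).map (a :: ·)) ++ ((shuffles (a :: u) v).map (b :: ·))
  termination_by u v => u.length + v.length

lemma lword_cons (a : Fin 2) (w : List (Fin 2)) :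
    lword (a :: w) = FreeAlgebra.ι ℚ a * lword w := by
  simp [lword]

lemma getLast?_cons_ne {α : Type*} (a : α) {l : List α} (h : l ≠ []) :
    (a :: l).getLast? = l.getLast? := by
  cases l with
  | nil => contradiction
  | cons b t => exact List.getLast?_cons_cons

lemma shprod_eq (u v : List (Fin 2)) :
    shprod u v = ((shuffles u v).map lword).sum := by
  induction u, v using shuffles.induct with
  | case1 w => rw [shprod, shuffles]; simp
  | case2 a u => rw [shprod, shuffles]; simp
  | case3 a u b v ih1 ih2 =>
    rw [shprod, shuffles, ih1, ih2]
    simp only [List.map_append, List.map_map, List.sum_append]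
    congr 1
    · rw [← List.sum_map_mul_left]
      congr 1
    · rw [← List.sum_map_mul_left]
      congr 1

lemma mem_shuffles (u v : List (Fin 2)) :
    ∀ w ∈ shuffles u v,
      w.length = u.length + v.length ∧ (w.getLast? = u.getLast? ∨ w.getLast? = v.getLast?) := by
  induction u, v using shuffles.induct with
  | case1 w' =>
    intro w hw
    rw [shuffles] at hw; simp at hw; subst hw; simp
  | case2 a u =>
    intro w hw
    rw [shuffles] at hw; simp at hw; subst hw; simp
  | case3 a u b v ih1 ih2 =>
    intro w hw
    rw [shuffles] at hw
    rcases List.mem_append.mp hw with h' | h' <;>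
      obtain ⟨w', hw', rfl⟩ := List.mem_map.mp h'
    · obtain ⟨hl, hlast⟩ := ih1 w' hw'
      have hne : w' ≠ [] := by
        intro hh; subst hh; simp at hl <;> omega
      refine ⟨by simp [hl]; omega, ?_⟩
      rw [getLast?_cons_ne a hne]
      rcases hlast with h2 | h2
      · left
        have hu : u ≠ [] := by
          intro hh; subst hh
          exact hne (List.getLast?_eq_none_iff.mp (by simpa using h2))
        rw [getLast?_cons_ne a hu]; exact h2
      · right; exact h2
    · obtain ⟨hl, hlast⟩ := ih2 w' hw'
      have hne : w' ≠ [] := by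
        intro hh; subst hh; simp at hl <;> omega
      refine ⟨by simp [hl]; omega, ?_⟩
      rw [getLast?_cons_ne b hne]
      rcases hlast with h2 | h2
      · left; exact h2
      · right
        have hv : v ≠ [] := by
          intro hh; subst hh
          exact hne (List.getLast?_eq_none_iff.mp (by simpa using h2))
        rw [getLast?_cons_ne b hv]; exact h2

/-- "y-terminated": the word does not end with the letter `x`. -/
def yt (u : List (Fin 2)) : Prop := u.getLast? ≠ some 0
lemma fin2_eq_one (a : Fin 2) (h : a ≠ 0) : a = 1 := by
  fin_cases a
  · exact absurd rfl h
  · rfl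

/-- The composition (exponent list) of a word in `x`,`y`. -/
def comp : List (Fin 2) → List ℕ
  | [] => []
  | a :: u =>
    if a = 0 then
      match comp u with
      | [] => []
      | k :: ks => (k + 1) :: ks
    else 1 :: comp u

lemma zletters_nil : zletters [] = [] := rfl

lemma zletters_cons (k : ℕ) (ks : List ℕ) :
    zletters (k :: ks) = List.replicate (k-1) 0 ++ 1 :: zletters ks := by
  simp [zletters, List.append_assoc]

lemma zletters_cons_ne_nil (k : ℕ) (ks : List ℕ) : zletters (k :: ks) ≠ [] := by
  rw [zletters_cons]
  simp

lemma comp_spec : ∀ (w : List (Fin 2)), yt w →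
    (∀ k ∈ comp w, 1 ≤ k) ∧ zletters (comp w) = w := by
  intro w
  induction w with
  | nil => intro _; exact ⟨by simp [comp], rfl⟩
  | cons a u ih =>
    intro hyt
    by_cases hu : u = []
    · subst hu
      have ha : a = 1 := by
        have : a ≠ 0 := by
          intro hh; subst hh; exact hyt rfl
        omega
      subst ha
      refine ⟨?_, ?_⟩
      · simp [comp]
      · rw [show comp [1] = [1] from rfl, zletters_cons]
        rfl
    · have hyu : yt u := by
        unfold yt at hyt ⊢
        rwa [getLast?_cons_ne a hu] at hyt
      obtain ⟨ih1, ih2⟩ := ih hyu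
      have hcu : comp u ≠ [] := by
        intro hh
        rw [hh, zletters_nil] at ih2
        exact hu ih2.symm
      rcases List.exists_cons_of_ne_nil hcu with ⟨k, ks, hks⟩
      have hk1 : 1 ≤ k := ih1 k (by rw [hks]; simp)
      by_cases ha : a = 0
      · subst ha
        have hc : comp (0 :: u) = (k+1) :: ks := by
          simp [comp, hks]
        have hrep : List.replicate ((k+1)-1) (0 : Fin 2) = 0 :: List.replicate (k-1) 0 := by
          have h' : (k+1)-1 = (k-1)+1 := by omega
          rw [h', List.replicate_succ]
        refine ⟨?_, ?_⟩
        · intro k' hk'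
          rw [hc] at hk'
          rcases List.mem_cons.mp hk' with h' | h'
          · omega
          · exact ih1 k' (by rw [hks]; exact List.mem_cons_of_mem _ h')
        · rw [hc, zletters_cons, hrep, List.cons_append, ← zletters_cons, ← hks, ih2]
      · have ha1 : a = 1 := fin2_eq_one a ha
        subst ha1
        have hc : comp (1 :: u) = 1 :: comp u := by
          simp [comp]
        refine ⟨?_, ?_⟩
        · intro k' hk'
          rw [hc] at hk'
          rcases List.mem_cons.mp hk' with h' | h'
          · omega
          · exact ih1 k' h'
        · rw [hc, zletters_cons, ih2]
          simp

lemma lword_append (s t : List (Fin 2)) : lword (s ++ t) = lword s * lword t := by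
  simp [lword]

lemma lword_replicate_zero (m : ℕ) : lword (List.replicate m 0) = x ^ m := by
  induction m with
  | zero => simp [lword, x]
  | succ m ih =>
    rw [List.replicate_succ, lword_cons, ih, ← x, pow_succ]
    exact (pow_mul_comm' x m).symm

lemma zword_eq_lword (ks : List ℕ) : zword ks = lword (zletters ks) := by
  induction ks with
  | nil => simp [zword, zletters_nil, lword]
  | cons k ks ih =>
    rw [zletters_cons, lword_append, lword_cons]
    show zword (k :: ks) = lword (List.replicate (k-1) 0) * (y * lword (zletters ks))
    rw [lword_replicate_zero, ← ih]
    simp [zword, zk, mul_assoc]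

lemma yt_zletters (ks : List ℕ) : yt (zletters ks) := by
  have h : ∀ ks : List ℕ, zletters ks = [] ∨ ∃ t, zletters ks = t ++ [(1 : Fin 2)] := by
    intro ks
    induction ks with
    | nil => left; rfl
    | cons k ks ih =>
      right
      rw [zletters_cons]
      rcases ih with h | ⟨t, ht⟩
      · exact ⟨List.replicate (k-1) 0, by rw [h]⟩
      · exact ⟨List.replicate (k-1) 0 ++ 1 :: t, by rw [ht]; simp⟩
  rcases h ks with h | ⟨t, ht⟩
  · rw [h]; intro hh; simp at hh
  · rw [ht]; unfold yt; rw [List.getLast?_concat]; simp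

open Finset

/-- Coefficients of the truncated multiple polylogarithm attached to a word, mod `p`. -/
def cseq (p : ℕ) : List (Fin 2) → ℕ → ZMod p
  | [], n => if n = 0 then 1 else 0
  | a :: u, n =>
      if n = 0 then 0
      else (if a = 0 then cseq p u n else ∑ m ∈ range n, cseq p u m) * (n : ZMod p)⁻¹

/-- Truncated nested harmonic sum. -/
def Ssum (p : ℕ) : List ℕ → ℕ → ZMod p
  | [], _ => 1
  | k :: ks, N => ∑ m ∈ range N, ((m : ZMod p) ^ k)⁻¹ * Ssum p ks m

/-- Convolution of coefficient sequences. -/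
def convo (p : ℕ) (u v : List (Fin 2)) (n : ℕ) : ZMod p :=
  ∑ i ∈ range (n+1), cseq p u i * cseq p v (n - i)

/-- Sum of coefficients over the shuffles. -/
def shc (p : ℕ) (u v : List (Fin 2)) (n : ℕ) : ZMod p :=
  ((shuffles u v).map (fun w => cseq p w n)).sum

lemma cseq_nil (p n : ℕ) : cseq p [] n = if n = 0 then 1 else 0 := by rw [cseq]

lemma cseq_cons (p : ℕ) (a : Fin 2) (u : List (Fin 2)) (n : ℕ) :
    cseq p (a :: u) n = if n = 0 then 0
      else (if a = 0 then cseq p u n else ∑ m ∈ range n, cseq p u m) * (n : ZMod p)⁻¹ := by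
  rw [cseq]

lemma cseq_zero (p : ℕ) (w : List (Fin 2)) : cseq p w 0 = if w = [] then 1 else 0 := by
  cases w with
  | nil => simp [cseq_nil]
  | cons a u => simp [cseq_cons]

variable {p : ℕ} [hp : Fact p.Prime]

lemma natCast_ne_zero' {n : ℕ} (h1 : 1 ≤ n) (h2 : n < p) : (n : ZMod p) ≠ 0 := by
  intro hh
  have := (ZMod.natCast_eq_zero_iff n p).mp hh
  have := Nat.le_of_dvd (by omega) this
  omega

lemma cast_mul_cseq_cons {a : Fin 2} {u : List (Fin 2)} (hau : a = 0 → u ≠ [])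
    {i : ℕ} (hip : i < p) :
    (i : ZMod p) * cseq p (a :: u) i
      = (if a = 0 then cseq p u i else ∑ m ∈ range i, cseq p u m) := by
  rcases Nat.eq_zero_or_pos i with rfl | hi
  · rw [cseq_zero]
    simp only [Nat.cast_zero, zero_mul]
    by_cases ha : a = 0
    · rw [if_pos ha, cseq_zero, if_neg (hau ha)]
    · rw [if_neg ha]
      simp
  · rw [cseq_cons, if_neg (by omega)]
    rw [mul_comm, mul_assoc, inv_mul_cancel₀ (natCast_ne_zero' hi hip), mul_one]

lemma cseq_replicate_append (j : ℕ) (w : List (Fin 2)) {n : ℕ} (hn : 1 ≤ n) :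
    cseq p (List.replicate j 0 ++ w) n = cseq p w n * ((n : ZMod p)⁻¹) ^ j := by
  induction j with
  | zero => simp
  | succ j ih =>
    rw [List.replicate_succ, List.cons_append, cseq_cons, if_neg (by omega), if_pos rfl, ih,
      pow_succ, mul_assoc]

lemma cseq_zletters_cons {k : ℕ} (hk : 1 ≤ k) (ks : List ℕ) {n : ℕ} (hn : 1 ≤ n) :
    cseq p (zletters (k :: ks)) n
      = (∑ m ∈ range n, cseq p (zletters ks) m) * ((n : ZMod p) ^ k)⁻¹ := by
  rw [zletters_cons, cseq_replicate_append _ _ hn, cseq_cons, if_neg (by omega), if_neg (by simp),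
    mul_assoc, ← pow_succ']
  have : k - 1 + 1 = k := by omega
  rw [this, inv_pow]

lemma sum_cseq_eq_Ssum : ∀ (ks : List ℕ), (∀ k ∈ ks, 1 ≤ k) → ∀ (N : ℕ), 1 ≤ N →
    ∑ n ∈ range N, cseq p (zletters ks) n = Ssum p ks N := by
  intro ks
  induction ks with
  | nil =>
    intro _ N hN
    rw [zletters_nil, Ssum]
    simp only [cseq_nil]
    rw [Finset.sum_ite_eq' (range N) 0 (fun _ => (1 : ZMod p))]
    simp [Finset.mem_range]
    omega
  | cons k ks ih =>
    intro hks N hN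
    have hk : 1 ≤ k := hks k (by simp)
    rw [Ssum]
    refine Finset.sum_congr rfl fun n hn => ?_
    rcases Nat.eq_zero_or_pos n with rfl | hn1
    · rw [cseq_zero, if_neg (zletters_cons_ne_nil k ks)]
      rw [Nat.cast_zero, zero_pow (by omega), inv_zero, zero_mul]
    · rw [cseq_zletters_cons hk ks hn1, ih (fun k' h' => hks k' (List.mem_cons_of_mem _ h')) n hn1,
        mul_comm]

lemma convo_comm (u v : List (Fin 2)) (n : ℕ) : convo p u v n = convo p v u n := by
  unfold convo
  rw [← Finset.sum_range_reflect (fun i => cseq p v i * cseq p u (n - i)) (n+1)]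
  refine Finset.sum_congr rfl fun i hi => ?_
  have hi' : i ≤ n := by have := Finset.mem_range.mp hi; omega
  have h1 : n + 1 - 1 - i = n - i := by omega
  have h2 : n - (n - i) = i := by omega
  rw [h1, h2, mul_comm]

private lemma list_sum_finset_sum {α β : Type*} (l : List α) (s : Finset β)
    (F : α → β → ZMod p) :
    (l.map (fun w => ∑ m ∈ s, F w m)).sum = ∑ m ∈ s, (l.map (fun w => F w m)).sum := by
  induction l with
  | nil => simp
  | cons a l ih => simp [ih, Finset.sum_add_distrib]

private lemma keyK (A B : ℕ → ZMod p) (n : ℕ) :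
    ∑ i ∈ range (n+1), A i * (∑ m ∈ range (n - i), B m)
      = ∑ m' ∈ range n, ∑ i ∈ range (m'+1), A i * B (m' - i) := by
  rw [Finset.sum_range_succ]
  simp only [Nat.sub_self, Finset.range_zero, Finset.sum_empty, mul_zero, add_zero]
  rw [triangleT1 (fun i j => A i * B j) n]
  exact Finset.sum_congr rfl fun i _ => (Finset.mul_sum _ _ _)

lemma yt_nil : yt ([] : List (Fin 2)) := by intro h; simp [List.getLast?] at h

lemma yt_tail {a : Fin 2} {u : List (Fin 2)} (h : yt (a :: u)) : yt u := by
  by_cases hu : u = []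
  · subst hu; exact yt_nil
  · unfold yt at h ⊢; rwa [getLast?_cons_ne a hu] at h

lemma yt_head {a : Fin 2} {u : List (Fin 2)} (h : yt (a :: u)) : a = 0 → u ≠ [] := by
  intro ha hu
  subst ha hu
  exact h rfl

theorem shc_eq_convo : ∀ (u v : List (Fin 2)), yt u → yt v → ∀ n, n < p →
    shc p u v n = convo p u v n := by
  intro u v
  induction u, v using shuffles.induct with
  | case1 w =>
    intro _ _ n _
    rw [shc, shuffles]
    show cseq p w n + 0 = _
    rw [add_zero, convo]
    simp only [cseq_nil, ite_mul, one_mul, zero_mul]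
    rw [Finset.sum_ite_eq' (range (n+1)) 0 (fun i => cseq p w (n - i))]
    simp
  | case2 a u =>
    intro _ _ n _
    rw [shc, shuffles]
    show cseq p (a :: u) n + 0 = _
    rw [add_zero, convo]
    have h1 : ∀ i ∈ range (n+1), cseq p (a :: u) i * cseq p [] (n - i)
        = if i = n then cseq p (a :: u) i else 0 := by
      intro i hi
      have hi' : i ≤ n := by have := Finset.mem_range.mp hi; omega
      rw [cseq_nil]
      by_cases h : i = n
      · subst h; simp
      · rw [if_neg (by omega), if_neg h, mul_zero]
    rw [Finset.sum_congr rfl h1, Finset.sum_ite_eq' (range (n+1)) n (fun i => cseq p (a :: u) i)]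
    simp
  | case3 a u b v ih1 ih2 =>
    intro hyt1 hyt2 n hnp
    have hytu : yt u := yt_tail hyt1
    have hytv : yt v := yt_tail hyt2
    have hau : a = 0 → u ≠ [] := yt_head hyt1
    have hbv : b = 0 → v ≠ [] := yt_head hyt2
    rcases Nat.eq_zero_or_pos n with rfl | hn1
    · rw [shc, shuffles, convo]
      simp [cseq_zero, List.map_map, Function.comp_def, List.map_const', List.sum_replicate]
    -- main case : n ≥ 1
    apply mul_left_cancel₀ (natCast_ne_zero' hn1 hnp)
    have hS1ne : ∀ w ∈ shuffles u (b :: v), w ≠ [] := by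
      intro w hw hwe
      have := (mem_shuffles u (b :: v) w hw).1
      rw [hwe] at this
      simp at this <;> omega
    have hS2ne : ∀ w ∈ shuffles (a :: u) v, w ≠ [] := by
      intro w hw hwe
      have := (mem_shuffles (a :: u) v w hw).1
      rw [hwe] at this
      simp at this <;> omega
    -- LHS computation
    have hL : (n : ZMod p) * shc p (a :: u) (b :: v) n
        = (if a = 0 then convo p u (b :: v) n else ∑ m ∈ range n, convo p u (b :: v) m)
          + (if b = 0 then convo p (a :: u) v n else ∑ m ∈ range n, convo p (a :: u) v m) := by
      rw [shc, shuffles, List.map_append, List.sum_append, mul_add, List.map_map, List.map_map]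
      simp only [Function.comp_def]
      congr 1
      · rw [← List.sum_map_mul_left]
        have hcongr : List.map (fun w => (n : ZMod p) * cseq p (a :: w) n)
              (shuffles u (b :: v))
            = List.map (fun w => if a = 0 then cseq p w n else ∑ m ∈ range n, cseq p w m)
              (shuffles u (b :: v)) := by
          refine List.map_congr_left fun w hw => ?_
          exact cast_mul_cseq_cons (fun _ => hS1ne w hw) hnp
        rw [hcongr]
        by_cases ha : a = 0
        · simp only [if_pos ha]
          exact ih1 hytu hyt2 n hnp
        · simp only [if_neg ha]
          rw [list_sum_finset_sum]
          exact Finset.sum_congr rfl fun m hm => ih1 hytu hyt2 m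
            (by have := Finset.mem_range.mp hm; omega)
      · rw [← List.sum_map_mul_left]
        have hcongr : List.map (fun w => (n : ZMod p) * cseq p (b :: w) n)
              (shuffles (a :: u) v)
            = List.map (fun w => if b = 0 then cseq p w n else ∑ m ∈ range n, cseq p w m)
              (shuffles (a :: u) v) := by
          refine List.map_congr_left fun w hw => ?_
          exact cast_mul_cseq_cons (fun _ => hS2ne w hw) hnp
        rw [hcongr]
        by_cases hb : b = 0
        · simp only [if_pos hb]
          exact ih2 hyt1 hytv n hnp
        · simp only [if_neg hb]
          rw [list_sum_finset_sum]
          exact Finset.sum_congr rfl fun m hm => ih2 hyt1 hytv m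
            (by have := Finset.mem_range.mp hm; omega)
    rw [hL]
    -- RHS computation
    have hR : (n : ZMod p) * convo p (a :: u) (b :: v) n
        = (∑ i ∈ range (n+1),
            (if a = 0 then cseq p u i else ∑ m ∈ range i, cseq p u m) * cseq p (b :: v) (n - i))
          + (∑ i ∈ range (n+1), cseq p (a :: u) i *
            (if b = 0 then cseq p v (n - i) else ∑ m ∈ range (n - i), cseq p v m)) := by
      rw [convo, Finset.mul_sum, ← Finset.sum_add_distrib]
      refine Finset.sum_congr rfl fun i hi => ?_
      have hi' : i ≤ n := by have := Finset.mem_range.mp hi; omega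
      have hcast : (n : ZMod p) = (i : ZMod p) + ((n - i : ℕ) : ZMod p) := by
        rw [← Nat.cast_add]
        congr 1
        omega
      rw [hcast, add_mul]
      congr 1
      · rw [← mul_assoc, cast_mul_cseq_cons (fun ha => hau ha) (by omega)]
      · rw [mul_left_comm, cast_mul_cseq_cons (fun hb => hbv hb) (by omega)]
    rw [hR]
    congr 1
    · by_cases ha : a = 0
      · simp only [if_pos ha]; rfl
      · simp only [if_neg ha]
        rw [← Finset.sum_range_reflect
          (fun i => (∑ m ∈ range i, cseq p u m) * cseq p (b :: v) (n - i)) (n+1)]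
        have hc : ∀ i ∈ range (n+1),
            (∑ m ∈ range (n + 1 - 1 - i), cseq p u m) * cseq p (b :: v) (n - (n + 1 - 1 - i))
              = cseq p (b :: v) i * (∑ m ∈ range (n - i), cseq p u m) := by
          intro i hi
          have hi' : i ≤ n := by have := Finset.mem_range.mp hi; omega
          have e1 : n + 1 - 1 - i = n - i := by omega
          have e2 : n - (n - i) = i := by omega
          rw [e1, e2, mul_comm]
        rw [Finset.sum_congr rfl hc, keyK (fun i => cseq p (b :: v) i) (fun m => cseq p u m) n]
        exact Finset.sum_congr rfl fun m _ => convo_comm u (b :: v) m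
    · by_cases hb : b = 0
      · simp only [if_pos hb]; rfl
      · simp only [if_neg hb]
        rw [keyK (fun i => cseq p (a :: u) i) (fun m => cseq p v m) n]
        rfl

private lemma cons_cond_iff {l : ℕ} (m : Fin p) (g : Fin l → Fin p) (M : ℕ) :
    ((∀ i, 0 < ((Fin.cons m g : Fin (l+1) → Fin p) i : ℕ))
        ∧ (∀ i j, i < j → ((Fin.cons m g : Fin (l+1) → Fin p) j : ℕ)
            < ((Fin.cons m g : Fin (l+1) → Fin p) i : ℕ))
        ∧ (∀ i, ((Fin.cons m g : Fin (l+1) → Fin p) i : ℕ) < M))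
      ↔ ((0 < (m : ℕ) ∧ (m : ℕ) < M)
        ∧ ((∀ i, 0 < (g i : ℕ)) ∧ (∀ i j, i < j → (g j : ℕ) < (g i : ℕ))
            ∧ (∀ i, (g i : ℕ) < (m : ℕ)))) := by
  constructor
  · rintro ⟨h1, h2, h3⟩
    refine ⟨⟨by simpa using h1 0, by simpa using h3 0⟩,
      fun i => by simpa using h1 i.succ,
      fun i j hij => by simpa using h2 i.succ j.succ (Fin.succ_lt_succ_iff.mpr hij),
      fun i => by simpa using h2 0 i.succ (Fin.succ_pos i)⟩
  · rintro ⟨⟨hm1, hm2⟩, hg1, hg2, hg3⟩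
    refine ⟨?_, ?_, ?_⟩
    · intro i
      induction i using Fin.cases with
      | zero => simpa using hm1
      | succ i => simpa using hg1 i
    · intro i j hij
      induction j using Fin.cases with
      | zero => exact absurd hij (by simp [Fin.lt_def])
      | succ j =>
        induction i using Fin.cases with
        | zero => simpa using hg3 j
        | succ i => simpa using hg2 i j (Fin.succ_lt_succ_iff.mp hij)
    · intro i
      induction i using Fin.cases with
      | zero => simpa using hm2
      | succ i => simpa using (hg3 i).trans hm2

private lemma ite_and_mul_sum {α : Type*} [Fintype α] (A : Prop) [Decidable A]
    (B : α → Prop) [DecidablePred B] (c : ZMod p) (F : α → ZMod p) :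
    (∑ g : α, if A ∧ B g then c * F g else 0)
      = if A then c * ∑ g : α, (if B g then F g else 0) else 0 := by
  by_cases hA : A
  · simp only [hA, true_and, if_true, Finset.mul_sum, mul_ite, mul_zero]
  · simp [hA]

private lemma bodyM : ∀ (ks : List ℕ), (∀ k ∈ ks, 1 ≤ k) → ∀ M, M ≤ p →
    (∑ n : Fin ks.length → Fin p,
      if (∀ i, 0 < (n i : ℕ)) ∧ (∀ i j, i < j → (n j : ℕ) < (n i : ℕ))
          ∧ (∀ i, (n i : ℕ) < M) then
        ∏ i, (((n i : ℕ) : ZMod p) ^ ks.get i)⁻¹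
      else 0) = Ssum p ks M := by
  intro ks
  induction ks with
  | nil =>
    intro _ M _
    rw [Ssum]
    have : ∀ n : Fin ([] : List ℕ).length → Fin p,
        ((∀ i, 0 < (n i : ℕ)) ∧ (∀ i j, i < j → (n j : ℕ) < (n i : ℕ))
          ∧ (∀ i, (n i : ℕ) < M)) := by
      intro n
      exact ⟨fun i => i.elim0, fun i => i.elim0, fun i => i.elim0⟩
    rw [Finset.sum_congr rfl (fun n _ => if_pos (this n))]
    simp
  | cons k ks ih =>
    intro hks M hM
    have hk : 1 ≤ k := hks k (by simp)
    have hks' : ∀ k' ∈ ks, 1 ≤ k' := fun k' h' => hks k' (List.mem_cons_of_mem _ h')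
    show (∑ n : Fin (ks.length + 1) → Fin p,
        if (∀ i, 0 < (n i : ℕ)) ∧ (∀ i j, i < j → (n j : ℕ) < (n i : ℕ))
            ∧ (∀ i, (n i : ℕ) < M) then
          ∏ i, (((n i : ℕ) : ZMod p) ^ (k :: ks).get i)⁻¹
        else 0) = Ssum p (k :: ks) M
    rw [← Equiv.sum_comp (Fin.consEquiv (fun _ => Fin p))]
    rw [Fintype.sum_prod_type]
    have hinner : ∀ m : Fin p,
        (∑ g : Fin ks.length → Fin p,
          (fun n : Fin (ks.length + 1) → Fin p =>
            if (∀ i, 0 < (n i : ℕ)) ∧ (∀ i j, i < j → (n j : ℕ) < (n i : ℕ))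
                ∧ (∀ i, (n i : ℕ) < M) then
              ∏ i, (((n i : ℕ) : ZMod p) ^ (k :: ks).get i)⁻¹
            else 0) (Fin.consEquiv (fun _ => Fin p) (m, g)))
        = if 0 < (m : ℕ) ∧ (m : ℕ) < M then
            (((m : ℕ) : ZMod p) ^ k)⁻¹ * Ssum p ks (m : ℕ) else 0 := by
      intro m
      have hstep : ∀ g : Fin ks.length → Fin p,
          (fun n : Fin (ks.length + 1) → Fin p =>
            if (∀ i, 0 < (n i : ℕ)) ∧ (∀ i j, i < j → (n j : ℕ) < (n i : ℕ))
                ∧ (∀ i, (n i : ℕ) < M) then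
              ∏ i, (((n i : ℕ) : ZMod p) ^ (k :: ks).get i)⁻¹
            else 0) (Fin.consEquiv (fun _ => Fin p) (m, g))
          = if (0 < (m : ℕ) ∧ (m : ℕ) < M)
              ∧ ((∀ i, 0 < (g i : ℕ)) ∧ (∀ i j, i < j → (g j : ℕ) < (g i : ℕ))
                ∧ (∀ i, (g i : ℕ) < (m : ℕ))) then
              (((m : ℕ) : ZMod p) ^ k)⁻¹ * ∏ i, (((g i : ℕ) : ZMod p) ^ ks.get i)⁻¹
            else 0 := by
        intro g
        have hce : (Fin.consEquiv (fun _ => Fin p)) (m, g) = Fin.cons m g := rfl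
        rw [hce]
        beta_reduce
        rw [if_congr (cons_cond_iff m g M) rfl rfl]
        congr 1
        rw [Fin.prod_univ_succ]
        simp [Fin.cons_zero, Fin.cons_succ]
      rw [Finset.sum_congr rfl (fun g _ => hstep g), ite_and_mul_sum]
      by_cases hm : 0 < (m : ℕ) ∧ (m : ℕ) < M
      · rw [if_pos hm, if_pos hm, ih hks' (m : ℕ) (le_of_lt m.isLt)]
      · rw [if_neg hm, if_neg hm]
    rw [Finset.sum_congr rfl (fun m _ => hinner m)]
    rw [show (∑ m : Fin p,
        if 0 < (m : ℕ) ∧ (m : ℕ) < M then (((m : ℕ) : ZMod p) ^ k)⁻¹ * Ssum p ks (m : ℕ) else 0)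
        = ∑ j ∈ range p, (if 0 < j ∧ j < M then ((j : ZMod p) ^ k)⁻¹ * Ssum p ks j else 0)
      from Fin.sum_univ_eq_sum_range
        (fun j => if 0 < j ∧ j < M then ((j : ZMod p) ^ k)⁻¹ * Ssum p ks j else 0) p]
    rw [Ssum]
    rw [← Finset.sum_subset (Finset.range_subset_range.mpr hM)
      (fun j _ hj => by
        rw [if_neg]
        intro hcond
        exact hj (Finset.mem_range.mpr hcond.2))]
    refine Finset.sum_congr rfl fun j hj => ?_
    have hjM : j < M := Finset.mem_range.mp hj
    rcases Nat.eq_zero_or_pos j with rfl | hj1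
    · rw [if_neg (by omega)]
      rw [Nat.cast_zero, zero_pow (by omega), inv_zero, zero_mul]
    · rw [if_pos ⟨hj1, hjM⟩]

lemma Ssum_nil (N : ℕ) : Ssum p [] N = 1 := by rw [Ssum]

lemma Ssum_cons (k : ℕ) (ks : List ℕ) (N : ℕ) :
    Ssum p (k :: ks) N = ∑ m ∈ range N, ((m : ZMod p) ^ k)⁻¹ * Ssum p ks m := by rw [Ssum]

lemma inv_pow_cast_sub {m k : ℕ} (h2 : m < p) :
    (((p - m : ℕ) : ZMod p) ^ k)⁻¹ = (-1 : ZMod p) ^ k * ((m : ZMod p) ^ k)⁻¹ := by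
  rw [Nat.cast_sub h2.le, ZMod.natCast_self, zero_sub, neg_pow, mul_inv]
  congr 1
  rw [← inv_pow, inv_neg, inv_one]

private lemma sum_reflect_zero (F G : ℕ → ZMod p) (hF0 : F 0 = 0) (hG0 : G 0 = 0)
    (h : ∀ m, 1 ≤ m → m < p → G m = F (p - m)) :
    ∑ i ∈ range p, F i = ∑ i ∈ range p, G i := by
  rw [Finset.range_eq_Ico, Finset.sum_eq_sum_Ico_succ_bot hp.out.pos,
    Finset.sum_eq_sum_Ico_succ_bot hp.out.pos, hF0, hG0]
  simp only [zero_add]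
  refine Eq.symm (Finset.sum_nbij' (s := Finset.Ico 1 p) (t := Finset.Ico 1 p)
    (f := G) (g := F) (fun m => p - m) (fun m => p - m) ?_ ?_ ?_ ?_ ?_)
  · intro a ha
    have := Finset.mem_Ico.mp ha
    beta_reduce
    exact Finset.mem_Ico.mpr (by omega)
  · intro a ha
    have := Finset.mem_Ico.mp ha
    beta_reduce
    exact Finset.mem_Ico.mpr (by omega)
  · intro a ha
    have := Finset.mem_Ico.mp ha
    beta_reduce
    omega
  · intro a ha
    have := Finset.mem_Ico.mp ha
    beta_reduce
    omega
  · intro a ha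
    have := Finset.mem_Ico.mp ha
    exact h a this.1 this.2

lemma cseq_zl_single {k : ℕ} (hk : 1 ≤ k) {n : ℕ} (hn : 1 ≤ n) :
    cseq p (zletters [k]) n = ((n : ZMod p) ^ k)⁻¹ := by
  rw [cseq_zletters_cons hk [] hn, zletters_nil]
  simp only [cseq_nil]
  rw [Finset.sum_ite_eq' (range n) 0 (fun _ => (1 : ZMod p)), if_pos (Finset.mem_range.mpr hn),
    one_mul]

lemma reflect_Ssum : ∀ (ks : List ℕ), ks ≠ [] → (∀ k ∈ ks, 1 ≤ k) → ∀ (ls : List ℕ),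
    Ssum p (ks.reverse ++ ls) p
      = (-1 : ZMod p) ^ ks.sum
          * ∑ i ∈ range p, cseq p (zletters ks) i * Ssum p ls (p - i) := by
  intro ks
  induction ks with
  | nil => intro h; exact absurd rfl h
  | cons k ks' IH =>
    intro _ hparts ls
    have hk : 1 ≤ k := hparts k (by simp)
    have hsq : ((-1 : ZMod p)) ^ k * (-1 : ZMod p) ^ k = 1 := by
      rw [← pow_add, ← two_mul, pow_mul]
      norm_num
    by_cases hks' : ks' = []
    · subst hks'
      -- base case : single [k]
      have hrefl : ∑ i ∈ range p, cseq p (zletters [k]) i * Ssum p ls (p - i)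
          = ∑ m ∈ range p, (-1 : ZMod p) ^ k * (((m : ZMod p) ^ k)⁻¹ * Ssum p ls m) := by
        refine sum_reflect_zero _ _ ?_ ?_ ?_
        · rw [cseq_zero, if_neg (zletters_cons_ne_nil k []), zero_mul]
        · rw [Nat.cast_zero, zero_pow (by omega), inv_zero, zero_mul, mul_zero]
        · intro m h1 h2
          rw [cseq_zl_single hk (by omega : 1 ≤ p - m), inv_pow_cast_sub h2]
          have : p - (p - m) = m := by omega
          rw [this, mul_assoc]
      rw [show ([k].reverse ++ ls) = k :: ls by simp, hrefl, ← Finset.mul_sum,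
        ← mul_assoc]
      rw [show ([k] : List ℕ).sum = k by simp, hsq, one_mul, Ssum_cons]
    · -- inductive step
      have hparts' : ∀ k' ∈ ks', 1 ≤ k' := fun k' h' => hparts k' (List.mem_cons_of_mem _ h')
      have hrev : ((k :: ks').reverse ++ ls) = ks'.reverse ++ (k :: ls) := by simp
      rw [hrev, IH hks' hparts' (k :: ls)]
      -- abbreviation for the common term
      set T : ℕ → ZMod p := fun m =>
        (∑ i ∈ range (p - m), cseq p (zletters ks') i) * (((m : ZMod p) ^ k)⁻¹ * Ssum p ls m)
        with hT
      have hL : ∑ i ∈ range p, cseq p (zletters ks') i * Ssum p (k :: ls) (p - i)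
          = ∑ m ∈ range p, T m := by
        have h1 : ∀ i ∈ range p, cseq p (zletters ks') i * Ssum p (k :: ls) (p - i)
            = ∑ m ∈ range (p - i),
                cseq p (zletters ks') i * (((m : ZMod p) ^ k)⁻¹ * Ssum p ls m) := by
          intro i _
          rw [Ssum_cons, Finset.mul_sum]
        rw [Finset.sum_congr rfl h1,
          triangleT2 (fun i m => cseq p (zletters ks') i * (((m : ZMod p) ^ k)⁻¹ * Ssum p ls m)) p]
        exact Finset.sum_congr rfl fun m _ => (Finset.sum_mul _ _ _).symm
      have hR : ∑ j ∈ range p, cseq p (zletters (k :: ks')) j * Ssum p ls (p - j)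
          = ∑ m ∈ range p, (-1 : ZMod p) ^ k * T m := by
        refine sum_reflect_zero _ _ ?_ ?_ ?_
        · rw [cseq_zero, if_neg (zletters_cons_ne_nil k ks'), zero_mul]
        · rw [hT]
          simp only [Nat.cast_zero, zero_pow (by omega : k ≠ 0), inv_zero, zero_mul, mul_zero]
        · intro m h1 h2
          rw [cseq_zletters_cons hk ks' (by omega : 1 ≤ p - m), inv_pow_cast_sub h2]
          have h3 : p - (p - m) = m := by omega
          rw [h3, hT]
          ring
      rw [hR, ← Finset.mul_sum, List.sum_cons, pow_add, hL, ← mul_assoc,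
        show (-1 : ZMod p) ^ k * (-1 : ZMod p) ^ ks'.sum * (-1 : ZMod p) ^ k
            = (-1 : ZMod p) ^ ks'.sum from by
          rw [mul_comm ((-1 : ZMod p) ^ k) ((-1 : ZMod p) ^ ks'.sum), mul_assoc, hsq, mul_one]]

lemma zletters_ne_nil {ks : List ℕ} (h : ks ≠ []) : zletters ks ≠ [] := by
  rcases List.exists_cons_of_ne_nil h with ⟨k, ks', rfl⟩
  exact zletters_cons_ne_nil k ks'

lemma master (ks ls : List ℕ) (hksne : ks ≠ []) (hks : ∀ k ∈ ks, 1 ≤ k)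
    (hls : ∀ k ∈ ls, 1 ≤ k) :
    ((shuffles (zletters ks) (zletters ls)).map (fun w => Ssum p (comp w) p)).sum
      = (-1 : ZMod p) ^ ks.sum * Ssum p (ks.reverse ++ ls) p := by
  have hu : yt (zletters ks) := yt_zletters ks
  have hv : yt (zletters ls) := yt_zletters ls
  have hune : zletters ks ≠ [] := zletters_ne_nil hksne
  have hp1 : 1 ≤ p := hp.out.pos
  -- rewrite each shuffle term as a coefficient sum
  have h1 : List.map (fun w => Ssum p (comp w) p) (shuffles (zletters ks) (zletters ls))
      = List.map (fun w => ∑ n ∈ range p, cseq p w n) (shuffles (zletters ks) (zletters ls)) := by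
    refine List.map_congr_left fun w hw => ?_
    obtain ⟨hlen, hlast⟩ := mem_shuffles _ _ w hw
    have hwne : w ≠ [] := by
      intro hh
      subst hh
      rw [List.length_nil] at hlen
      have h0 : (zletters ks).length = 0 := by omega
      exact hune (List.length_eq_zero_iff.mp h0)
    have hytw : yt w := by
      rcases hlast with h2 | h2
      · intro hh; rw [h2] at hh; exact hu hh
      · intro hh; rw [h2] at hh; exact hv hh
    obtain ⟨hparts, hzl⟩ := comp_spec w hytw
    rw [← sum_cseq_eq_Ssum (comp w) hparts p hp1, hzl]
  rw [h1, list_sum_finset_sum]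
  have h2 : ∀ n ∈ range p,
      ((shuffles (zletters ks) (zletters ls)).map (fun w => cseq p w n)).sum
        = convo p (zletters ks) (zletters ls) n := by
    intro n hn
    exact shc_eq_convo (zletters ks) (zletters ls) hu hv n (Finset.mem_range.mp hn)
  rw [Finset.sum_congr rfl h2]
  -- convert the convolution sum into the reflected form
  have h3 : ∑ n ∈ range p, convo p (zletters ks) (zletters ls) n
      = ∑ i ∈ range p, cseq p (zletters ks) i * Ssum p ls (p - i) := by
    unfold convo
    rw [triangleT1 (fun i j => cseq p (zletters ks) i * cseq p (zletters ls) j) p]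
    refine Finset.sum_congr rfl fun i hi => ?_
    rw [← Finset.mul_sum,
      sum_cseq_eq_Ssum ls hls (p - i) (by have := Finset.mem_range.mp hi; omega)]
  rw [h3, reflect_Ssum ks hksne hks ls, ← mul_assoc, ← pow_add, ← two_mul, pow_mul]
  norm_num

lemma zetaA_eq (k : List ℕ) (hk : ∀ x ∈ k, 1 ≤ x) :
    zetaA k = Ideal.Quotient.mk finSupportIdeal
      (fun q : Nat.Primes => Ssum q k q) := by
  unfold zetaA
  congr 1
  funext q
  haveI : Fact (Nat.Prime (q : ℕ)) := ⟨q.2⟩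
  rw [← bodyM k hk (q : ℕ) le_rfl]
  refine Finset.sum_congr rfl fun n _ => ?_
  refine if_congr ?_ rfl rfl
  constructor
  · rintro ⟨h1, h2⟩
    exact ⟨h1, h2, fun i => (n i).isLt⟩
  · rintro ⟨h1, h2, _⟩
    exact ⟨h1, h2⟩

private lemma list_sum_pi_apply {α : Type*} (l : List α)
    (F : α → ∀ q : Nat.Primes, ZMod q) (q : Nat.Primes) :
    ((l.map F).sum) q = (l.map (fun w => F w q)).sum := by
  induction l with
  | nil => simp
  | cons a l ih => simp [ih]

/-- **Shuffle–reversal relation for `𝒜`-finite multiple zeta values** (Kaneko–Zagier).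
For all words `w = z_{k_1}⋯z_{k_r}`, `w' = z_{k'_1}⋯z_{k'_s}` in `𝔥¹`:
`Z_𝒜(w ш w') = (−1)^{k_1+⋯+k_r} Z_𝒜(z_{k_r}⋯z_{k_1}z_{k'_1}⋯z_{k'_s})`. -/
theorem shuffle_reversal_relation_fmzv_A
    (Z : H →ₗ[ℚ] Acal) (hZone : Z 1 = 1)
    (hZ : ∀ ks : List ℕ, (∀ k ∈ ks, 1 ≤ k) → Z (zword ks) = zetaA ks)
    (ks ls : List ℕ) (hks : ∀ k ∈ ks, 1 ≤ k) (hls : ∀ k ∈ ls, 1 ≤ k) :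
    Z (shprod (zletters ks) (zletters ls))
      = (-1 : Acal) ^ ks.sum * Z (zword (ks.reverse ++ ls)) := by
  by_cases hks0 : ks = []
  · subst hks0
    rw [zletters_nil, shprod_eq,
      show shuffles [] (zletters ls) = [zletters ls] from by rw [shuffles]]
    simp only [List.map_cons, List.map_nil, List.sum_cons, List.sum_nil, add_zero]
    rw [← zword_eq_lword ls]
    simp
  · have hune := zletters_ne_nil hks0
    have hu : yt (zletters ks) := yt_zletters ks
    have hv : yt (zletters ls) := yt_zletters ls
    have hR : (-1 : Acal) ^ ks.sum * Z (zword (ks.reverse ++ ls))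
        = Ideal.Quotient.mk finSupportIdeal
            (fun q : Nat.Primes => (-1 : ZMod q) ^ ks.sum * Ssum q (ks.reverse ++ ls) q) := by
      have hparts : ∀ k ∈ ks.reverse ++ ls, 1 ≤ k := by
        intro k hk
        rcases List.mem_append.mp hk with h | h
        · exact hks k (List.mem_reverse.mp h)
        · exact hls k h
      rw [hZ _ hparts, zetaA_eq _ hparts,
        show (-1 : Acal) = Ideal.Quotient.mk finSupportIdeal (-1 : ∀ q : Nat.Primes, ZMod q)
          from by rw [map_neg, map_one],
        ← map_pow, ← map_mul]
      congr 1
    have hL : Z (shprod (zletters ks) (zletters ls))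
        = Ideal.Quotient.mk finSupportIdeal
            (((shuffles (zletters ks) (zletters ls)).map
              (fun w => fun q : Nat.Primes => Ssum q (comp w) q)).sum) := by
      rw [shprod_eq, map_list_sum Z, List.map_map]
      have h1 : List.map (⇑Z ∘ lword) (shuffles (zletters ks) (zletters ls))
          = List.map ((Ideal.Quotient.mk finSupportIdeal) ∘
              (fun w => fun q : Nat.Primes => Ssum q (comp w) q))
              (shuffles (zletters ks) (zletters ls)) := by
        refine List.map_congr_left fun w hw => ?_
        obtain ⟨hlen, hlast⟩ := mem_shuffles _ _ w hw
        have hwne : w ≠ [] := by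
          intro hh
          subst hh
          rw [List.length_nil] at hlen
          have h0 : (zletters ks).length = 0 := by omega
          exact hune (List.length_eq_zero_iff.mp h0)
        have hytw : yt w := by
          rcases hlast with h2 | h2
          · intro hh; rw [h2] at hh; exact hu hh
          · intro hh; rw [h2] at hh; exact hv hh
        obtain ⟨hparts, hzl⟩ := comp_spec w hytw
        show Z (lword w) = Ideal.Quotient.mk finSupportIdeal
          (fun q : Nat.Primes => Ssum q (comp w) q)
        calc Z (lword w) = Z (zword (comp w)) := by rw [zword_eq_lword, hzl]
          _ = zetaA (comp w) := hZ _ hparts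
          _ = _ := zetaA_eq _ hparts
      rw [h1, ← List.map_map, ← map_list_sum]
    rw [hL, hR]
    congr 1
    funext q
    haveI : Fact (Nat.Prime (q : ℕ)) := ⟨q.2⟩
    rw [list_sum_pi_apply]
    exact master ks ls hks0 hks hls

end FMZVNote
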